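/- Let φ ∈ C¹([0, π/2]; ℝ). Then ∫₀^{π/2} e^{i(1 − cos θ)N} (dφ/dθ)(θ) dθ → 0 as N → ∞. -/

import Mathlib

open MeasureTheory Real Filter FourierTransform
open scoped Topology

/-- for `φ ∈ C¹([0,π/2];ℝ)`, the oscillatory integral
`∫₀^{π/2} e^{i(1-cos θ)N} φ'(θ) dθ` tends to `0` as `N → ∞`. -/
theorem oscillatory_derivative_integral (φ : ℝ → ℝ)
    (hφ : ContDiffOn ℝ 1 φ (Set.Icc 0 (π / 2))) :
    Filter.Tendsto (fun N : ℝ =>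
        ∫ θ in Set.Ioo (0 : ℝ) (π / 2),
          Complex.exp (Complex.I * ((1 - Real.cos θ : ℝ) : ℂ) * (N : ℂ)) *
            ((derivWithin φ (Set.Icc 0 (π / 2)) θ : ℝ) : ℂ))
      Filter.atTop (𝓝 0) := by
  have hπ : (0:ℝ) < π / 2 := by positivity
  set ψ := derivWithin φ (Set.Icc 0 (π / 2)) with hψdef
  have hψc : ContinuousOn ψ (Set.Icc 0 (π / 2)) :=
    hφ.continuousOn_derivWithin (uniqueDiffOn_Icc hπ) le_rfl
  obtain ⟨C, hC⟩ := isCompact_Icc.exists_bound_of_continuousOn hψc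
  have hC0 : 0 ≤ C := le_trans (norm_nonneg _) (hC 0 ⟨le_rfl, hπ.le⟩)
  set k : ℝ → ℂ := fun z => ((ψ (arccos (1 - z)) / Real.sin (arccos (1 - z)) : ℝ) : ℂ) with hkdef
  -- arccos facts
  have harc : ∀ z ∈ Set.Ioo (0:ℝ) 1, arccos (1 - z) ∈ Set.Ioo 0 (π/2) := by
    intro z hz
    exact ⟨arccos_pos.2 (by linarith [hz.1]), arccos_lt_pi_div_two.2 (by linarith [hz.2])⟩
  have hsin : ∀ z ∈ Set.Ioo (0:ℝ) 1, Real.sqrt z ≤ Real.sin (arccos (1 - z)) := by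
    intro z hz
    rw [Real.sin_arccos]
    apply Real.sqrt_le_sqrt
    nlinarith [hz.1, hz.2]
  have hsinpos : ∀ z ∈ Set.Ioo (0:ℝ) 1, 0 < Real.sin (arccos (1 - z)) := fun z hz =>
    lt_of_lt_of_le (Real.sqrt_pos.2 hz.1) (hsin z hz)
  -- continuity of k on Ioo 0 1
  have harcc : ContinuousOn (fun z : ℝ => arccos (1 - z)) (Set.Ioo 0 1) :=
    (Real.continuous_arccos.comp (continuous_const.sub continuous_id)).continuousOn
  have hmaps : Set.MapsTo (fun z : ℝ => arccos (1 - z)) (Set.Ioo 0 1) (Set.Icc 0 (π/2)) :=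
    fun z hz => ⟨(harc z hz).1.le, (harc z hz).2.le⟩
  have hkc : ContinuousOn k (Set.Ioo 0 1) := by
    apply Complex.continuous_ofReal.comp_continuousOn
    exact (hψc.comp harcc hmaps).div
      (Real.continuous_sin.comp_continuousOn harcc)
      (fun z hz => (hsinpos z hz).ne')
  -- integrability of k on Ioo 0 1
  have hki : IntegrableOn k (Set.Ioo 0 1) := by
    have h1 : IntegrableOn (fun z : ℝ => C * z ^ (-(1:ℝ)/2)) (Set.Ioo 0 1) := by
      have := (intervalIntegral.intervalIntegrable_rpow' (a := 0) (b := 1)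
        (r := -(1:ℝ)/2) (by norm_num))
      rw [intervalIntegrable_iff_integrableOn_Ioc_of_le (by norm_num)] at this
      exact (this.mono_set Set.Ioo_subset_Ioc_self).const_mul C
    refine h1.integrable.mono' (hkc.aestronglyMeasurable measurableSet_Ioo) ?_
    filter_upwards [ae_restrict_mem measurableSet_Ioo] with z hz
    have hz0 : (0:ℝ) < z := hz.1
    have hsq : Real.sqrt z ≤ Real.sin (arccos (1 - z)) := hsin z hz
    have hsqpos : 0 < Real.sqrt z := Real.sqrt_pos.2 hz0
    have hb : ‖ψ (arccos (1 - z))‖ ≤ C := hC _ (hmaps hz)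
    have : ‖k z‖ = |ψ (arccos (1 - z))| / Real.sin (arccos (1 - z)) := by
      rw [hkdef]
      simp only [Complex.norm_real, Real.norm_eq_abs, abs_div,
        abs_of_pos (hsinpos z hz)]
    rw [this]
    have hle : |ψ (arccos (1 - z))| / Real.sin (arccos (1 - z)) ≤ C / Real.sqrt z :=
      div_le_div₀ hC0 hb hsqpos hsq
    refine hle.trans (le_of_eq ?_)
    rw [Real.sqrt_eq_rpow, div_eq_mul_inv, ← Real.rpow_neg hz0.le]
    norm_num
  -- change of variables
  have key : ∀ N : ℝ,
      (∫ θ in Set.Ioo (0:ℝ) (π/2),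
        Complex.exp (Complex.I * ((1 - Real.cos θ : ℝ) : ℂ) * (N : ℂ)) * (ψ θ : ℂ))
      = ∫ z in Set.Ioo (0:ℝ) 1,
          Complex.exp (Complex.I * (z : ℂ) * (N : ℂ)) * k z := by
    intro N
    have himg : (fun θ : ℝ => 1 - Real.cos θ) '' Set.Ioo 0 (π/2) = Set.Ioo 0 1 := by
      ext z
      simp only [Set.mem_image, Set.mem_Ioo]
      constructor
      · rintro ⟨θ, hθ, rfl⟩
        have h1 : Real.cos θ < 1 := by
          have := Real.strictAntiOn_cos (Set.mem_Icc.2 ⟨le_rfl, pi_pos.le⟩)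
            (Set.mem_Icc.2 ⟨hθ.1.le, by linarith [hθ.2, pi_pos]⟩) hθ.1
          simpa using this
        have h2 : 0 < Real.cos θ := Real.cos_pos_of_mem_Ioo
          ⟨by linarith [hθ.1, pi_pos], hθ.2⟩
        exact ⟨by linarith, by linarith⟩
      · intro hz
        refine ⟨arccos (1 - z), harc z ⟨hz.1, hz.2⟩, ?_⟩
        show 1 - Real.cos (arccos (1 - z)) = z
        rw [Real.cos_arccos (by linarith [hz.2]) (by linarith [hz.1])]
        ring
    have hderiv : ∀ θ ∈ Set.Ioo (0:ℝ) (π/2),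
        HasDerivWithinAt (fun θ : ℝ => 1 - Real.cos θ) (Real.sin θ) (Set.Ioo 0 (π/2)) θ := by
      intro θ _
      simpa using ((Real.hasDerivAt_cos θ).const_sub 1).hasDerivWithinAt
        (s := Set.Ioo (0:ℝ) (π/2))
    have hinj : Set.InjOn (fun θ : ℝ => 1 - Real.cos θ) (Set.Ioo 0 (π/2)) := by
      have hm : StrictMonoOn (fun θ : ℝ => 1 - Real.cos θ) (Set.Icc 0 π) := by
        intro a ha b hb hab
        have := Real.strictAntiOn_cos ha hb hab
        simpa using sub_lt_sub_left this 1
      exact (hm.injOn).mono (fun θ hθ => Set.mem_Icc.2 ⟨hθ.1.le, by linarith [hθ.2, pi_pos]⟩)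
    have := MeasureTheory.integral_image_eq_integral_abs_deriv_smul
      (s := Set.Ioo (0:ℝ) (π/2)) measurableSet_Ioo hderiv hinj
      (fun z => Complex.exp (Complex.I * (z : ℂ) * (N : ℂ)) * k z)
    rw [himg] at this
    rw [this]
    apply setIntegral_congr_fun measurableSet_Ioo
    intro θ hθ
    have hsθ : 0 < Real.sin θ := Real.sin_pos_of_pos_of_lt_pi hθ.1 (by linarith [hθ.2, pi_pos])
    have harcθ : arccos (1 - (1 - Real.cos θ)) = θ := by
      rw [show (1 - (1 - Real.cos θ)) = Real.cos θ by ring,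
        Real.arccos_cos hθ.1.le (by linarith [hθ.2, pi_pos])]
    simp only [hkdef, harcθ, abs_of_pos hsθ, Complex.real_smul]
    rw [Complex.ofReal_div]
    have : (Real.sin θ : ℂ) ≠ 0 := Complex.ofReal_ne_zero.2 hsθ.ne'
    field_simp
  -- Riemann–Lebesgue
  set K : ℝ → ℂ := (Set.Ioo (0:ℝ) 1).indicator k with hKdef
  have hW : Tendsto (fun N : ℝ => -(N / (2 * π))) atTop (cocompact ℝ) := by
    rw [cocompact_eq_atBot_atTop]
    refine Tendsto.mono_right ?_ le_sup_left
    exact tendsto_neg_atTop_atBot.comp (tendsto_id.atTop_div_const (by positivity))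
  have hRL := (Real.tendsto_integral_exp_smul_cocompact K).comp hW
  refine hRL.congr fun N => ?_
  simp only [Function.comp]
  have hind : (fun v : ℝ => 𝐞 (-(v * -(N / (2 * π)))) • K v)
      = (Set.Ioo (0:ℝ) 1).indicator (fun v => 𝐞 (-(v * -(N / (2 * π)))) • k v) := by
    funext v
    rw [hKdef]
    by_cases hv : v ∈ Set.Ioo (0:ℝ) 1 <;> simp [Set.indicator_of_mem, Set.indicator_of_notMem, hv]
  rw [hind, MeasureTheory.integral_indicator measurableSet_Ioo, key N]
  apply setIntegral_congr_fun measurableSet_Ioo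
  intro z _
  simp only [Circle.smul_def, Real.fourierChar_apply, smul_eq_mul]
  have harg : (2 * π * -(z * -(N / (2 * π))) : ℝ) = z * N := by
    field_simp
  rw [harg]
  push_cast
  ring_nf
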